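/- Let L1 and L2 be regular languages over a finite alphabet Σ. Then the set of words u that admit at least two distinct factorizations with respect to L1 and L2 — i.e., there exist pairs (u1, u2) ≠ (v1, v2) with u = u1 ++ u2 = v1 ++ v2, u1, v1 ∈ L1 and u2, v2 ∈ L2 — is a regular language. -/

import Mathlib

open List
namespace AmbAux
variable {α σ1 σ2 : Type} (D1 : DFA α σ1) (D2 : DFA α σ2)

def ambNFA : NFA α (σ1 ⊕ (σ1 × σ2) ⊕ (σ2 × σ2)) where
  step s a :=
    match s with
    | .inl q => {t | t = .inl (D1.step q a) ∨
        (q ∈ D1.accept ∧ t = .inr (.inl (D1.step q a, D2.step D2.start a)))}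
    | .inr (.inl (q, p)) => {t | t = .inr (.inl (D1.step q a, D2.step p a)) ∨
        (q ∈ D1.accept ∧ t = .inr (.inr (D2.step p a, D2.step D2.start a)))}
    | .inr (.inr (p, r)) => {t | t = .inr (.inr (D2.step p a, D2.step r a))}
  start := {.inl D1.start}
  accept := {s | match s with
    | .inl _ => False
    | .inr (.inl (q, p)) => q ∈ D1.accept ∧ p ∈ D2.accept ∧ D2.start ∈ D2.accept
    | .inr (.inr (p, r)) => p ∈ D2.accept ∧ r ∈ D2.accept}

lemma ambNFA_eval (u : List α) :
    (∀ q, Sum.inl q ∈ (ambNFA D1 D2).eval u ↔ q = D1.eval u) ∧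
    (∀ q p, Sum.inr (Sum.inl (q, p)) ∈ (ambNFA D1 D2).eval u ↔
      q = D1.eval u ∧ ∃ i < u.length,
        D1.eval (u.take i) ∈ D1.accept ∧ p = D2.eval (u.drop i)) ∧
    (∀ p r, Sum.inr (Sum.inr (p, r)) ∈ (ambNFA D1 D2).eval u ↔
      ∃ i j, i < j ∧ j < u.length ∧ D1.eval (u.take i) ∈ D1.accept ∧
        D1.eval (u.take j) ∈ D1.accept ∧
        p = D2.eval (u.drop i) ∧ r = D2.eval (u.drop j)) := by
  induction u using List.reverseRecOn with
  | nil =>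
      refine ⟨fun q => ?_, fun q p => ?_, fun p r => ?_⟩ <;>
        simp [ambNFA, NFA.eval, NFA.evalFrom]
  | append_singleton u a ih =>
      obtain ⟨ih1, ih2, ih3⟩ := ih
      have hstep : (ambNFA D1 D2).eval (u ++ [a]) =
          (ambNFA D1 D2).stepSet ((ambNFA D1 D2).eval u) a :=
        NFA.eval_append_singleton _ _ _
      have htake : ∀ i ≤ u.length, (u ++ [a]).take i = u.take i := fun i hi =>
        List.take_append_of_le_length hi
      have hdrop : ∀ i ≤ u.length, (u ++ [a]).drop i = u.drop i ++ [a] := fun i hi =>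
        List.drop_append_of_le_length hi
      have htakeL : (u ++ [a]).take u.length = u := List.take_left
      have hdropL : (u ++ [a]).drop u.length = [a] := List.drop_left
      refine ⟨fun q => ?_, fun q p => ?_, fun p r => ?_⟩
      · rw [hstep, NFA.mem_stepSet]
        constructor
        · rintro ⟨t, ht, hq⟩
          rcases t with q' | ⟨q', p'⟩ | ⟨p', r'⟩ <;> simp [ambNFA] at hq
          rw [(ih1 q').1 ht] at hq
          simp [hq]
        · rintro rfl
          exact ⟨.inl (D1.eval u), (ih1 _).2 rfl, by simp [ambNFA]⟩
      · rw [hstep, NFA.mem_stepSet]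
        constructor
        · rintro ⟨t, ht, hq⟩
          rcases t with q' | ⟨q', p'⟩ | ⟨p', r'⟩ <;> simp [ambNFA] at hq
          · -- split at position u.length
            obtain ⟨hacc, hq, hp⟩ := hq
            rw [(ih1 q').1 ht] at hacc hq
            refine ⟨by simp [hq], u.length, by simp, ?_, ?_⟩
            · rwa [htakeL]
            · rw [hdropL]; simp [hp]
          · obtain ⟨hq, hp⟩ := hq
            obtain ⟨rfl, i, hi, hacc, hp'⟩ := (ih2 q' p').1 ht
            refine ⟨by simp [hq], i, by simp; omega, ?_, ?_⟩
            · rwa [htake i hi.le]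
            · rw [hdrop i hi.le]; simp [hp, hp']
        · rintro ⟨rfl, i, hi, hacc, rfl⟩
          simp only [List.length_append, List.length_singleton] at hi
          rcases Nat.lt_or_ge i u.length with hlt | hge
          · refine ⟨.inr (.inl (D1.eval u, D2.eval (u.drop i))),
              (ih2 _ _).2 ⟨rfl, i, hlt, by rwa [← htake i hlt.le], rfl⟩, ?_⟩
            simp [ambNFA, hdrop i hlt.le]
          · have : i = u.length := by omega
            subst this
            refine ⟨.inl (D1.eval u), (ih1 _).2 rfl, ?_⟩
            rw [htakeL] at hacc
            simp only [ambNFA, Set.mem_setOf_eq]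
            exact Or.inr ⟨hacc, by simp [hdropL]⟩
      · rw [hstep, NFA.mem_stepSet]
        constructor
        · rintro ⟨t, ht, hq⟩
          rcases t with q' | ⟨q', p'⟩ | ⟨p', r'⟩ <;> simp [ambNFA] at hq
          · -- second split at position u.length
            obtain ⟨hacc, hp, hr⟩ := hq
            obtain ⟨rfl, i, hi, hacc1, hp'⟩ := (ih2 q' p').1 ht
            refine ⟨i, u.length, hi, by simp, ?_, ?_, ?_, ?_⟩
            · rwa [htake i hi.le]
            · rwa [htakeL]
            · rw [hdrop i hi.le]; simp [hp, hp']
            · rw [hdropL]; simp [hr]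
          · obtain ⟨hp, hr⟩ := hq
            obtain ⟨i, j, hij, hj, hacc1, hacc2, hp', hr'⟩ := (ih3 p' r').1 ht
            refine ⟨i, j, hij, by simp; omega, ?_, ?_, ?_, ?_⟩
            · rwa [htake i (hij.trans hj).le]
            · rwa [htake j hj.le]
            · rw [hdrop i (hij.trans hj).le]; simp [hp, hp']
            · rw [hdrop j hj.le]; simp [hr, hr']
        · rintro ⟨i, j, hij, hj, hacc1, hacc2, rfl, rfl⟩
          simp only [List.length_append, List.length_singleton] at hj
          rcases Nat.lt_or_ge j u.length with hlt | hge
          · have hi : i < u.length := hij.trans hlt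
            refine ⟨.inr (.inr (D2.eval (u.drop i), D2.eval (u.drop j))),
              (ih3 _ _).2 ⟨i, j, hij, hlt, by rwa [← htake i hi.le],
                by rwa [← htake j hlt.le], rfl, rfl⟩, ?_⟩
            simp [ambNFA, hdrop i hi.le, hdrop j hlt.le]
          · have : j = u.length := by omega
            subst this
            refine ⟨.inr (.inl (D1.eval u, D2.eval (u.drop i))),
              (ih2 _ _).2 ⟨rfl, i, hij, by rwa [← htake i hij.le], rfl⟩, ?_⟩
            rw [htakeL] at hacc2
            simp [ambNFA, hdrop i hij.le, hdropL]
            exact hacc2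

lemma ambNFA_accepts (u : List α) :
    u ∈ (ambNFA D1 D2).accepts ↔ ∃ i j, i < j ∧ j ≤ u.length ∧
      u.take i ∈ D1.accepts ∧ u.take j ∈ D1.accepts ∧
      u.drop i ∈ D2.accepts ∧ u.drop j ∈ D2.accepts := by
  obtain ⟨e1, e2, e3⟩ := ambNFA_eval D1 D2 u
  constructor
  · rintro ⟨s, hs, hmem⟩
    rcases s with q | ⟨q, p⟩ | ⟨p, r⟩
    · exact absurd hs (by simp [ambNFA])
    · obtain ⟨hq, hp, hst⟩ : q ∈ D1.accept ∧ p ∈ D2.accept ∧ D2.start ∈ D2.accept := hs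
      obtain ⟨rfl, i, hi, hacc, rfl⟩ := (e2 _ _).1 hmem
      refine ⟨i, u.length, hi, le_rfl, hacc, ?_, hp, ?_⟩
      · simpa [DFA.mem_accepts] using hq
      · simpa [DFA.mem_accepts] using hst
    · obtain ⟨hp, hr⟩ : p ∈ D2.accept ∧ r ∈ D2.accept := hs
      obtain ⟨i, j, hij, hj, hacc1, hacc2, rfl, rfl⟩ := (e3 _ _).1 hmem
      exact ⟨i, j, hij, hj.le, hacc1, hacc2, hp, hr⟩
  · rintro ⟨i, j, hij, hj, h1, h2, h3, h4⟩
    rcases Nat.lt_or_ge j u.length with hlt | hge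
    · refine ⟨.inr (.inr (D2.eval (u.drop i), D2.eval (u.drop j))), ⟨h3, h4⟩,
        (e3 _ _).2 ⟨i, j, hij, hlt, h1, h2, rfl, rfl⟩⟩
    · have hje : j = u.length := le_antisymm hj hge
      subst hje
      rw [List.take_length] at h2
      rw [List.drop_length] at h4
      refine ⟨.inr (.inl (D1.eval u, D2.eval (u.drop i))), ⟨h2, h3, h4⟩,
        (e2 _ _).2 ⟨rfl, i, hij, h1, rfl⟩⟩

end AmbAux

/-- The set of words admitting at least two distinct factorizations with
respect to `L1` and `L2` is a regular language. -/
theorem ambiguouslyDecomposable_isRegular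
    {α : Type} [Fintype α] (L1 L2 : Language α)
    (h1 : L1.IsRegular) (h2 : L2.IsRegular) :
    Language.IsRegular
      ({u | ∃ p q : List α × List α, p ≠ q ∧
          p.1 ++ p.2 = u ∧ q.1 ++ q.2 = u ∧
          p.1 ∈ L1 ∧ p.2 ∈ L2 ∧ q.1 ∈ L1 ∧ q.2 ∈ L2} : Language α) := by
  obtain ⟨σ1, i1, D1, rfl⟩ := h1
  obtain ⟨σ2, i2, D2, rfl⟩ := h2
  haveI := i1; haveI := i2
  refine ⟨Set (σ1 ⊕ σ1 × σ2 ⊕ σ2 × σ2), inferInstance, (AmbAux.ambNFA D1 D2).toDFA, ?_⟩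
  rw [NFA.toDFA_correct]
  ext u
  rw [AmbAux.ambNFA_accepts]
  constructor
  · rintro ⟨i, j, hij, hj, h1, h2, h3, h4⟩
    have hi : i ≤ u.length := hij.le.trans hj
    refine ⟨(u.take i, u.drop i), (u.take j, u.drop j), ?_, by simp, by simp,
      h1, h3, h2, h4⟩
    intro h
    have := congrArg (fun p => p.1.length) h
    simp only [List.length_take] at this
    omega
  · rintro ⟨p, q, hne, hp, hq, hp1, hp2, hq1, hq2⟩
    have hpt : p.1 = u.take p.1.length := by rw [← hp, List.take_left]
    have hpd : p.2 = u.drop p.1.length := by rw [← hp, List.drop_left]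
    have hqt : q.1 = u.take q.1.length := by rw [← hq, List.take_left]
    have hqd : q.2 = u.drop q.1.length := by rw [← hq, List.drop_left]
    have hple : p.1.length ≤ u.length := by rw [← hp]; simp
    have hqle : q.1.length ≤ u.length := by rw [← hq]; simp
    have hne' : p.1.length ≠ q.1.length := by
      intro h
      apply hne
      have h1 : p.1 = q.1 := by rw [hpt, hqt, h]
      have h2 : p.2 = q.2 := by rw [hpd, hqd, h]
      exact Prod.ext h1 h2
    rcases Nat.lt_or_ge p.1.length q.1.length with hlt | hge
    · exact ⟨p.1.length, q.1.length, hlt, hqle, hpt ▸ hp1, hqt ▸ hq1,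
        hpd ▸ hp2, hqd ▸ hq2⟩
    · have hlt : q.1.length < p.1.length := lt_of_le_of_ne hge (Ne.symm hne')
      exact ⟨q.1.length, p.1.length, hlt, hple, hqt ▸ hq1, hpt ▸ hp1,
        hqd ▸ hq2, hpd ▸ hp2⟩
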